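/- arXiv:math/0111082 — 2 statements merged into one kernel-verified Lean document; each statement's English description precedes it below -/
import Mathlib

section
/- Every homogeneous cyclically invariant polynomial φ ∈ ℂ[θ₁,…,θₙ] of positive degree d splits as φ = φ_dec + φ_res, where φ_dec is cyclically decomposable and φ_res is a constant multiple of Σᵢ θᵢ^d (interpreted as 0 when n is odd, and where nontrivial φ_res can occur only when d is even). -/
open MvPolynomial

namespace Stmt3Aux

open Fin.NatCast Fin.CommRing

set_option linter.unusedSectionVars false

variable {n : ℕ} [NeZero n]

/-- The ideal generated by the cyclic edge sums `X (k-1) + X k`. -/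
noncomputable def I (n : ℕ) [NeZero n] : Ideal (MvPolynomial (Fin n) ℂ) :=
  Ideal.span (Set.range fun k : Fin n => (X (k - 1) + X k : MvPolynomial (Fin n) ℂ))

lemma gen_mem (k : Fin n) : (X (k - 1) + X k : MvPolynomial (Fin n) ℂ) ∈ I n :=
  Ideal.subset_span ⟨k, rfl⟩

lemma smul_mem_I (c : ℂ) {p : MvPolynomial (Fin n) ℂ} (hp : p ∈ I n) : c • p ∈ I n := by
  rw [smul_eq_C_mul]; exact Ideal.mul_mem_left _ _ hp

lemma sub_aeval_mem (s : Fin n → MvPolynomial (Fin n) ℂ) (f : MvPolynomial (Fin n) ℂ) :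
    f - aeval s f ∈ Ideal.span (Set.range fun i => X i - s i) := by
  induction f using MvPolynomial.induction_on with
  | C a => simp
  | add p q hp hq =>
      rw [map_add]
      have : p + q - (aeval s p + aeval s q) = (p - aeval s p) + (q - aeval s q) := by ring
      rw [this]; exact Ideal.add_mem _ hp hq
  | mul_X p i hp =>
      rw [map_mul, aeval_X]
      have : p * X i - aeval s p * s i
          = p * (X i - s i) + (p - aeval s p) * s i := by ring
      rw [this]
      exact Ideal.add_mem _ (Ideal.mul_mem_left _ _ (Ideal.subset_span ⟨i, rfl⟩))
        (Ideal.mul_mem_right _ _ hp)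

lemma X_sub_mem (m : ℕ) :
    (X ((m : Fin n)) - ((-1 : ℂ) ^ m) • X 0 : MvPolynomial (Fin n) ℂ) ∈ I n := by
  induction m with
  | zero => simp
  | succ m ih =>
      have hcast : ((m + 1 : ℕ) : Fin n) = (m : Fin n) + 1 := by push_cast; ring
      have hsub : ((m : Fin n) + 1) - 1 = (m : Fin n) := by ring
      have key : (X ((m + 1 : ℕ) : Fin n) - ((-1 : ℂ) ^ (m + 1)) • X 0 : MvPolynomial (Fin n) ℂ)
          = (X (((m : Fin n) + 1) - 1) + X ((m : Fin n) + 1))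
            - (X ((m : Fin n)) - ((-1 : ℂ) ^ m) • X 0) := by
        rw [hcast, hsub, pow_succ]
        simp only [smul_eq_C_mul, map_mul, map_pow, map_neg, map_one]
        ring
      rw [key]
      exact Ideal.sub_mem _ (gen_mem _) ih

lemma X_mem_of_odd (hn : Odd n) (i : Fin n) : (X i : MvPolynomial (Fin n) ℂ) ∈ I n := by
  have key : ∀ m : ℕ,
      (X i - ((-1 : ℂ) ^ m) • X (i + (m : Fin n)) : MvPolynomial (Fin n) ℂ) ∈ I n := by
    intro m
    induction m with
    | zero => simp
    | succ m ih =>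
        have hcast : i + ((m + 1 : ℕ) : Fin n) = (i + (m : Fin n)) + 1 := by push_cast; ring
        have hsub : ((i + (m : Fin n)) + 1) - 1 = i + (m : Fin n) := by ring
        have key2 : (X i - ((-1 : ℂ) ^ (m + 1)) • X (i + ((m + 1 : ℕ) : Fin n))
              : MvPolynomial (Fin n) ℂ)
            = (X i - ((-1 : ℂ) ^ m) • X (i + (m : Fin n)))
              + ((-1 : ℂ) ^ m) • (X (((i + (m : Fin n)) + 1) - 1) + X ((i + (m : Fin n)) + 1)) := by
          rw [hcast, hsub, pow_succ]
          simp only [smul_eq_C_mul, map_mul, map_pow, map_neg, map_one, map_add]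
          ring
        rw [key2]
        exact Ideal.add_mem _ ih (smul_mem_I _ (gen_mem _))
  have h := key n
  have h1 : ((n : ℕ) : Fin n) = 0 := by simp
  have h2 : ((-1 : ℂ) ^ n) = -1 := hn.neg_one_pow
  rw [h1, h2, add_zero] at h
  have h3 : (X i - (-1 : ℂ) • X i : MvPolynomial (Fin n) ℂ) = C (2 : ℂ) * X i := by
    simp only [smul_eq_C_mul, map_neg, map_one, map_ofNat]
    ring
  have h4 : (X i : MvPolynomial (Fin n) ℂ) = (2⁻¹ : ℂ) • (X i - (-1 : ℂ) • X i) := by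
    rw [h3, smul_eq_C_mul, ← mul_assoc, ← map_mul]
    norm_num
  rw [h4]
  exact smul_mem_I _ h

/-- Core substitution lemma: a homogeneous polynomial evaluated at `w i • y`. -/
lemma aeval_smul_eq {S : Type*} [CommRing S] [Algebra ℂ S] {d : ℕ}
    {f : MvPolynomial (Fin n) ℂ} (hf : f.IsHomogeneous d) (w : Fin n → ℂ) (y : S) :
    aeval (fun i => w i • y) f = eval w f • y ^ d := by
  rw [aeval_def, eval₂_eq, eval_eq, Finset.sum_smul]
  refine Finset.sum_congr rfl fun m hm => ?_
  have hdeg : ∑ i ∈ m.support, m i = d := by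
    have := hf (mem_support_iff.mp hm)
    rwa [Pi.one_def, ← Finsupp.degree_eq_weight_one, Finsupp.degree_apply] at this
  have : ∀ i : Fin n, (w i • y) ^ m i = (w i ^ m i) • y ^ m i := fun i => smul_pow _ _ _
  simp_rw [this]
  simp_rw [Algebra.smul_def]
  rw [Finset.prod_mul_distrib, ← map_prod, Finset.prod_pow_eq_pow_sum, hdeg, map_mul]
  ring

/-- The evaluation point `(1, -1, 1, -1, …)`. -/
noncomputable def v (n : ℕ) : Fin n → ℂ := fun i => (-1 : ℂ) ^ (i : ℕ)

lemma eval_smul_eq {d : ℕ} {f : MvPolynomial (Fin n) ℂ} (hf : f.IsHomogeneous d)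
    (w : Fin n → ℂ) (a : ℂ) :
    eval (fun i => w i * a) f = eval w f * a ^ d :=
  aeval_smul_eq (S := ℂ) hf w a

lemma homSum (d : ℕ) :
    (∑ i : Fin n, (X i : MvPolynomial (Fin n) ℂ) ^ d).IsHomogeneous d :=
  IsHomogeneous.sum _ _ _ (fun i _ => isHomogeneous_X_pow i d)

lemma eval_v_sum_pow {d : ℕ} (hde : Even d) :
    eval (v n) (∑ i : Fin n, (X i : MvPolynomial (Fin n) ℂ) ^ d) = n := by
  rw [map_sum]
  have h1 : ∀ i : Fin n, eval (v n) ((X i : MvPolynomial (Fin n) ℂ) ^ d) = 1 := by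
    intro i
    rw [map_pow, eval_X]
    show ((-1 : ℂ) ^ (i : ℕ)) ^ d = 1
    rw [← pow_mul, mul_comm, pow_mul, hde.neg_one_pow, one_pow]
  simp [h1]

lemma eval_v_eq_zero {d : ℕ} (hn : Even n) (hde : Odd d)
    {φ : MvPolynomial (Fin n) ℂ} (hhom : φ.IsHomogeneous d)
    (hcyc : rename (fun i : Fin n => i + 1) φ = φ) :
    eval (v n) φ = 0 := by
  have hmod : ∀ a : ℕ, ((-1 : ℂ)) ^ (a % n) = (-1 : ℂ) ^ a := by
    intro a
    conv_rhs => rw [← Nat.mod_add_div a n]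
    rw [pow_add, pow_mul, hn.neg_one_pow, one_pow, mul_one]
  have hcomp : (v n ∘ fun i : Fin n => i + 1) = fun i => v n i * (-1 : ℂ) := by
    funext i
    show ((-1 : ℂ)) ^ (((i + 1 : Fin n) : ℕ)) = (-1 : ℂ) ^ (i : ℕ) * (-1 : ℂ)
    rw [Fin.add_def, hmod, pow_add, Fin.val_one', hmod, pow_one]
  have h2 : eval (v n) φ = eval (v n ∘ fun i : Fin n => i + 1) φ := by
    conv_lhs => rw [← hcyc]
    rw [eval_rename]
  rw [hcomp, eval_smul_eq hhom, hde.neg_one_pow, mul_neg_one] at h2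
  have h3 : eval (v n) φ + eval (v n) φ = 0 := by
    nth_rewrite 1 [h2]; ring
  exact add_self_eq_zero.mp h3

/-- Membership in the edge ideal from vanishing at the alternating point. -/
lemma mem_I_of_eval_zero {d : ℕ} {f : MvPolynomial (Fin n) ℂ}
    (hf : f.IsHomogeneous d) (h0 : eval (v n) f = 0) : f ∈ I n := by
  have h1 := sub_aeval_mem (fun i => v n i • X 0) f
  rw [aeval_smul_eq hf (v n) (X 0), h0, zero_smul, sub_zero] at h1
  refine Ideal.span_le.mpr ?_ h1
  rintro _ ⟨i, rfl⟩
  have h2 := X_sub_mem (n := n) i.val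
  rwa [Fin.cast_val_eq_self] at h2

/-- For odd `n`, every homogeneous polynomial of positive degree lies in the edge ideal. -/
lemma mem_I_of_odd (hn : Odd n) {d : ℕ} (hd : 0 < d) {f : MvPolynomial (Fin n) ℂ}
    (hf : f.IsHomogeneous d) : f ∈ I n := by
  have h1 := sub_aeval_mem (fun _ : Fin n => (0 : MvPolynomial (Fin n) ℂ)) f
  have hc : constantCoeff f = 0 := by
    have := hf.coeff_eq_zero (d := 0) (by simp [map_zero]; omega)
    simpa [constantCoeff_eq] using this
  rw [aeval_zero', hc, map_zero, sub_zero] at h1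
  refine Ideal.span_le.mpr ?_ h1
  rintro _ ⟨i, rfl⟩
  simpa using X_mem_of_odd hn i

lemma rename_add_add (j k : Fin n) (p : MvPolynomial (Fin n) ℂ) :
    rename (fun i : Fin n => i + k) (rename (fun i : Fin n => i + j) p)
      = rename (fun i : Fin n => i + (j + k)) p := by
  rw [rename_rename]
  have : ((fun i : Fin n => i + k) ∘ fun i : Fin n => i + j)
      = fun i : Fin n => i + (j + k) := by
    funext i; simp [Function.comp, add_assoc]
  rw [this]

lemma cyc_pow {φ : MvPolynomial (Fin n) ℂ}
    (hcyc : rename (fun i : Fin n => i + 1) φ = φ) (j : Fin n) :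
    rename (fun i : Fin n => i + j) φ = φ := by
  have key : ∀ m : ℕ, rename (fun i : Fin n => i + (m : Fin n)) φ = φ := by
    intro m
    induction m with
    | zero =>
        have : (fun i : Fin n => i + ((0 : ℕ) : Fin n)) = id := by funext i; simp
        rw [this, rename_id, AlgHom.id_apply]
    | succ m ih =>
        have : (fun i : Fin n => i + ((m + 1 : ℕ) : Fin n))
            = (fun i : Fin n => i + 1) ∘ (fun i : Fin n => i + (m : Fin n)) := by
          funext i; simp only [Function.comp]; push_cast; ring
        rw [this, ← rename_rename, ih, hcyc]
  have := key j.val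
  rwa [Fin.cast_val_eq_self] at this

lemma rename_sum_pow (j : Fin n) (d : ℕ) :
    rename (fun i : Fin n => i + j) (∑ i : Fin n, (X i : MvPolynomial (Fin n) ℂ) ^ d)
      = ∑ i : Fin n, (X i : MvPolynomial (Fin n) ℂ) ^ d := by
  rw [map_sum]
  simp_rw [map_pow, rename_X]
  exact Fintype.sum_equiv (Equiv.addRight j) _ _ (fun i => rfl)

/-- Symmetrization: a cyclically invariant element of the edge ideal is cyclically
decomposable. -/
lemma symmetrize {f : MvPolynomial (Fin n) ℂ}
    (hinv : ∀ j : Fin n, rename (fun i : Fin n => i + j) f = f)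
    (c : Fin n → MvPolynomial (Fin n) ℂ)
    (hf : ∑ k : Fin n, c k * (X (k - 1) + X k) = f) :
    ∃ ψ : MvPolynomial (Fin n) ℂ,
      f = ∑ k : Fin n, (X (k - 1) + X k) * rename (fun i : Fin n => i + k) ψ := by
  refine ⟨(n : ℂ)⁻¹ • ∑ l : Fin n, rename (fun i : Fin n => i + l) (c (-l)), ?_⟩
  have hn : (n : ℂ) ≠ 0 := Nat.cast_ne_zero.mpr (NeZero.ne n)
  have step1 : ∀ k : Fin n,
      rename (fun i : Fin n => i + k)
        ((n : ℂ)⁻¹ • ∑ l : Fin n, rename (fun i : Fin n => i + l) (c (-l)))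
      = (n : ℂ)⁻¹ • ∑ j : Fin n, rename (fun i : Fin n => i + j) (c (k - j)) := by
    intro k
    rw [map_smul, map_sum]
    congr 1
    simp_rw [rename_add_add]
    refine Fintype.sum_equiv (Equiv.addRight k) _ _ (fun l => ?_)
    simp only [Equiv.coe_addRight]
    rw [show k - (l + k) = -l from by ring]
  have inner : ∀ j : Fin n,
      ∑ k : Fin n, (X (k - 1) + X k) * rename (fun i : Fin n => i + j) (c (k - j))
        = rename (fun i : Fin n => i + j) f := by
    intro j
    rw [← hf, map_sum]
    refine (Fintype.sum_equiv (Equiv.addRight j) _ _ ?_).symm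
    intro m
    simp only [Equiv.coe_addRight, map_mul, map_add, rename_X]
    rw [show m + j - j = m from by ring, show (m - 1) + j = (m + j) - 1 from by ring]
    ring
  calc f = (n : ℂ)⁻¹ • ∑ j : Fin n, rename (fun i : Fin n => i + j) f := by
          simp_rw [hinv]
          rw [Finset.sum_const, Finset.card_univ, Fintype.card_fin,
            ← Nat.cast_smul_eq_nsmul ℂ, smul_smul, inv_mul_cancel₀ hn, one_smul]
    _ = (n : ℂ)⁻¹ • ∑ j : Fin n, ∑ k : Fin n,
          (X (k - 1) + X k) * rename (fun i : Fin n => i + j) (c (k - j)) := by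
          simp_rw [inner]
    _ = ∑ k : Fin n, (X (k - 1) + X k) *
          ((n : ℂ)⁻¹ • ∑ j : Fin n, rename (fun i : Fin n => i + j) (c (k - j))) := by
          rw [Finset.sum_comm (γ := Fin n)]
          rw [Finset.smul_sum]
          refine Finset.sum_congr rfl fun k _ => ?_
          rw [mul_smul_comm, Finset.mul_sum]
    _ = _ := by simp_rw [step1]

/-- The main construction: from membership of `φ - c • ∑ Xᵢ^d` in the edge ideal. -/
lemma main_of_mem {d : ℕ} {φ : MvPolynomial (Fin n) ℂ}
    (hcyc : rename (fun i : Fin n => i + 1) φ = φ) (c : ℂ)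
    (hmem : φ - c • ∑ i : Fin n, (X i : MvPolynomial (Fin n) ℂ) ^ d ∈ I n) :
    ∃ ψ : MvPolynomial (Fin n) ℂ,
      φ = (∑ k : Fin n, (X (k - 1) + X k) * rename (fun i : Fin n => i + k) ψ)
          + c • ∑ i : Fin n, X i ^ d := by
  set f := φ - c • ∑ i : Fin n, (X i : MvPolynomial (Fin n) ℂ) ^ d with hfdef
  have hinv : ∀ j : Fin n, rename (fun i : Fin n => i + j) f = f := by
    intro j
    rw [hfdef, map_sub, map_smul, cyc_pow hcyc j, rename_sum_pow]
  obtain ⟨cf, hcf⟩ := (Submodule.mem_span_range_iff_exists_fun _).mp hmem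
  simp_rw [smul_eq_mul] at hcf
  obtain ⟨ψ, hψ⟩ := symmetrize hinv cf hcf
  refine ⟨ψ, ?_⟩
  rw [← hψ, hfdef]
  ring

end Stmt3Aux

open Stmt3Aux

/-- Every homogeneous cyclically invariant polynomial `φ` of positive degree `d` in `n`
(cyclically indexed) variables splits as `φ = φ_dec + φ_res`, where `φ_dec` is cyclically
decomposable (a cyclic symmetrization `∑_k (θ_{k-1} + θ_k)·ψ∘(shift by k)`) and
`φ_res = c • ∑ᵢ θᵢ^d` is residual; moreover `c = 0` if `n` is odd, and a nonzero `c`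
can occur only when `d` is even. -/
theorem stmt3 (n : ℕ) [NeZero n] (d : ℕ) (hd : 0 < d)
    (φ : MvPolynomial (Fin n) ℂ)
    (hhom : φ.IsHomogeneous d)
    (hcyc : rename (fun i : Fin n => i + 1) φ = φ) :
    ∃ (ψ : MvPolynomial (Fin n) ℂ) (c : ℂ),
      φ = (∑ k : Fin n, (X (k - 1) + X k) * rename (fun i : Fin n => i + k) ψ)
          + c • ∑ i : Fin n, X i ^ d
      ∧ (Odd n → c = 0) ∧ (c ≠ 0 → Even d) := by
  rcases Nat.even_or_odd n with hn | hn
  · -- n even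
    rcases Nat.even_or_odd d with hde | hde
    · -- d even
      set c : ℂ := eval (v n) φ / n with hc
      have hnz : (n : ℂ) ≠ 0 := Nat.cast_ne_zero.mpr (NeZero.ne n)
      have hfhom : (φ - c • ∑ i : Fin n, (X i : MvPolynomial (Fin n) ℂ) ^ d).IsHomogeneous d := by
        refine hhom.sub ?_
        rw [smul_eq_C_mul]
        exact (homSum d).C_mul c
      have h0 : eval (v n) (φ - c • ∑ i : Fin n, (X i : MvPolynomial (Fin n) ℂ) ^ d) = 0 := by
        rw [map_sub, smul_eq_C_mul, map_mul, eval_C, eval_v_sum_pow hde, hc,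
          div_mul_cancel₀ _ hnz, sub_self]
      obtain ⟨ψ, hψ⟩ := main_of_mem hcyc c (mem_I_of_eval_zero hfhom h0)
      exact ⟨ψ, c, hψ, fun h => absurd hn (Nat.not_even_iff_odd.mpr h), fun _ => hde⟩
    · -- d odd
      have h0 : eval (v n) (φ - (0 : ℂ) • ∑ i : Fin n, (X i : MvPolynomial (Fin n) ℂ) ^ d)
          = 0 := by
        rw [zero_smul, sub_zero]
        exact eval_v_eq_zero hn hde hhom hcyc
      have hfhom : (φ - (0 : ℂ) • ∑ i : Fin n, (X i : MvPolynomial (Fin n) ℂ) ^ d).IsHomogeneous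
          d := by rw [zero_smul, sub_zero]; exact hhom
      obtain ⟨ψ, hψ⟩ := main_of_mem hcyc 0 (mem_I_of_eval_zero hfhom h0)
      exact ⟨ψ, 0, hψ, fun _ => rfl, fun h => absurd rfl h⟩
  · -- n odd
    have hmem : φ - (0 : ℂ) • ∑ i : Fin n, (X i : MvPolynomial (Fin n) ℂ) ^ d ∈ I n := by
      rw [zero_smul, sub_zero]
      exact mem_I_of_odd hn hd hhom
    obtain ⟨ψ, hψ⟩ := main_of_mem hcyc 0 hmem
    exact ⟨ψ, 0, hψ, fun _ => rfl, fun h => absurd rfl h⟩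
end

section
/- The set of formal triangular differential operators D(s_*, ∂/∂s_*) = Σ_{‖n_*‖₊ ≤ ‖m_*‖₋} a_{m_*,n_*} s_*^{m_*} ∂^{|n_*|}/∂s_*^{n_*} with bounded s_*-degree forms a (non-commutative) subalgebra of the algebra of all formal differential operators on ℂ[[s_*]]: it is closed under addition, scalar multiplication, and composition. -/
/-! Formal triangular differential operators in the variables `s₀, s₁, s₂, …`
(indexed by `ℕ`), acting on `ℂ[[s_*]] = MvPowerSeries ℕ ℂ`. -/

/-- `‖n‖₊ = ∑ᵢ (2i+1) nᵢ`. -/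
def normPlus (n : ℕ →₀ ℕ) : ℕ := ∑ i ∈ n.support, (2 * i + 1) * n i

/-- `‖m‖₋ = ∑_{i ≥ 1} (2i−1) mᵢ` (the `i = 0` term vanishes thanks to truncated
subtraction). -/
def normMinus (m : ℕ →₀ ℕ) : ℕ := ∑ i ∈ m.support, (2 * i - 1) * m i

/-- Total degree `|m| = ∑ mᵢ` of the monomial `s^m`. -/
def degS (m : ℕ →₀ ℕ) : ℕ := ∑ i ∈ m.support, m i

/-- The iterated formal partial derivative `∂^{|n|}/∂s^n`, defined coefficientwise:
`(∂^n f)_μ = (∏ᵢ (μᵢ+nᵢ)!/μᵢ!) · f_{μ+n}`. -/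
noncomputable def pdMulti (n : ℕ →₀ ℕ) (f : MvPowerSeries ℕ ℂ) : MvPowerSeries ℕ ℂ :=
  fun μ => (∏ i ∈ n.support,
      ((Nat.factorial (μ i + n i) / Nat.factorial (μ i) : ℕ) : ℂ)) *
    MvPowerSeries.coeff (R := ℂ) (μ + n) f

/-- The formal differential operator `∑_{m,n} a_{m,n} s^m ∂^{|n|}/∂s^n` applied to `f`,
each coefficient of the result being a `finsum` over the pairs of multi-indices `(m,n)`. -/
noncomputable def applyOp (a : ((ℕ →₀ ℕ) × (ℕ →₀ ℕ)) → ℂ) (f : MvPowerSeries ℕ ℂ) :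
    MvPowerSeries ℕ ℂ :=
  fun μ => ∑ᶠ p : (ℕ →₀ ℕ) × (ℕ →₀ ℕ),
    a p * MvPowerSeries.coeff (R := ℂ) μ (MvPowerSeries.monomial (R := ℂ) p.1 1 * pdMulti p.2 f)

/-- `D` is a formal triangular differential operator: it is given by a symbol
`a = (a_{m,n})` supported on pairs with `‖n‖₊ ≤ ‖m‖₋` and with bounded `s`-degree. -/
def IsTriangular (D : MvPowerSeries ℕ ℂ → MvPowerSeries ℕ ℂ) : Prop :=
  ∃ a : ((ℕ →₀ ℕ) × (ℕ →₀ ℕ)) → ℂ,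
    (∀ p, a p ≠ 0 → normPlus p.2 ≤ normMinus p.1) ∧
    (∃ B, ∀ p, a p ≠ 0 → degS p.1 ≤ B) ∧
    (∀ f, D f = applyOp a f)

namespace Tri
open Finset

abbrev Pair := ((ℕ →₀ ℕ) × (ℕ →₀ ℕ))

lemma normPlus_eq_sum (n : ℕ →₀ ℕ) : normPlus n = n.sum fun i v => (2*i+1)*v := rfl
lemma normMinus_eq_sum (n : ℕ →₀ ℕ) : normMinus n = n.sum fun i v => (2*i-1)*v := rfl
lemma degS_eq_sum (n : ℕ →₀ ℕ) : degS n = n.sum fun _ v => v := rfl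

lemma normPlus_add (m n : ℕ →₀ ℕ) : normPlus (m + n) = normPlus m + normPlus n := by
  simp only [normPlus_eq_sum]
  exact Finsupp.sum_add_index' (by simp) (by intros; ring)

lemma normMinus_add (m n : ℕ →₀ ℕ) : normMinus (m + n) = normMinus m + normMinus n := by
  simp only [normMinus_eq_sum]
  exact Finsupp.sum_add_index' (by simp) (by intros; ring)

lemma degS_add (m n : ℕ →₀ ℕ) : degS (m + n) = degS m + degS n := by
  simp only [degS_eq_sum]
  exact Finsupp.sum_add_index' (by simp) (by intros; ring)

lemma normPlus_mono {m n : ℕ →₀ ℕ} (h : m ≤ n) : normPlus m ≤ normPlus n := by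
  obtain ⟨d, rfl⟩ := le_iff_exists_add.mp h
  rw [normPlus_add]; omega

lemma normMinus_mono {m n : ℕ →₀ ℕ} (h : m ≤ n) : normMinus m ≤ normMinus n := by
  obtain ⟨d, rfl⟩ := le_iff_exists_add.mp h
  rw [normMinus_add]; omega

lemma degS_mono {m n : ℕ →₀ ℕ} (h : m ≤ n) : degS m ≤ degS n := by
  obtain ⟨d, rfl⟩ := le_iff_exists_add.mp h
  rw [degS_add]; omega

lemma normMinus_le_normPlus (n : ℕ →₀ ℕ) : normMinus n ≤ normPlus n := by
  apply Finset.sum_le_sum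
  intro i _
  have : 2 * i - 1 ≤ 2 * i + 1 := by omega
  exact Nat.mul_le_mul_right _ this

lemma normPlus_sub_add {k n : ℕ →₀ ℕ} (h : k ≤ n) :
    normPlus (n - k) + normPlus k = normPlus n := by
  rw [← normPlus_add, tsub_add_cancel_of_le h]

lemma normMinus_sub_add {k n : ℕ →₀ ℕ} (h : k ≤ n) :
    normMinus (n - k) + normMinus k = normMinus n := by
  rw [← normMinus_add, tsub_add_cancel_of_le h]

lemma term_le_normPlus (n : ℕ →₀ ℕ) (i : ℕ) : (2 * i + 1) * n i ≤ normPlus n := by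
  by_cases h : n i = 0
  · simp [h]
  · exact Finset.single_le_sum (f := fun j => (2*j+1) * n j) (fun _ _ => Nat.zero_le _)
      (Finsupp.mem_support_iff.mpr h)

/-- A uniform bound finsupp: everything with `normPlus ≤ C` lies below `nu C`. -/
noncomputable def nu (C : ℕ) : ℕ →₀ ℕ := ∑ i ∈ Finset.range (C+1), Finsupp.single i C

lemma nu_apply (C i : ℕ) : nu C i = if i < C + 1 then C else 0 := by
  rw [nu, Finset.sum_apply']
  simp only [Finsupp.single_apply]
  rw [Finset.sum_ite_eq' (Finset.range (C+1)) i fun _ => C]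
  simp [Finset.mem_range]

lemma le_nu {n : ℕ →₀ ℕ} {C : ℕ} (h : normPlus n ≤ C) : n ≤ nu C := by
  rw [Finsupp.le_def]
  intro i
  rcases Nat.eq_zero_or_pos (n i) with h0 | h0
  · simp [h0]
  · have ht := term_le_normPlus n i
    rw [nu_apply]
    have : 2 * i + 1 ≤ (2*i+1) * n i := Nat.le_mul_of_pos_right _ h0
    have hni : n i ≤ (2*i+1) * n i := Nat.le_mul_of_pos_left _ (by omega)
    rw [if_pos (by omega)]
    omega

lemma nu_mono {C C' : ℕ} (h : C ≤ C') : nu C ≤ nu C' := by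
  rw [Finsupp.le_def]; intro i
  rw [nu_apply, nu_apply]
  split <;> split <;> omega

/-! ### The basic coefficient shape -/

noncomputable def RR (x n : ℕ →₀ ℕ) : ℂ :=
  ∏ i ∈ n.support, ((Nat.descFactorial (x i + n i) (n i) : ℕ) : ℂ)

noncomputable def Efun (p : Pair) (μ : ℕ →₀ ℕ) (f : MvPowerSeries ℕ ℂ) : ℂ :=
  if p.1 ≤ μ then RR (μ - p.1) p.2 * f (μ - p.1 + p.2) else 0

lemma factratio_eq (a b : ℕ) :
    ((Nat.factorial (a + b) / Nat.factorial a : ℕ) : ℂ)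
      = ((Nat.descFactorial (a + b) b : ℕ) : ℂ) := by
  congr 1
  have h := Nat.factorial_mul_descFactorial (Nat.le_add_left b a)
  simp only [Nat.add_sub_cancel] at h
  exact Nat.div_eq_of_eq_mul_left (Nat.factorial_pos a) (by rw [h.symm, mul_comm])

lemma pdMulti_eq (n : ℕ →₀ ℕ) (f : MvPowerSeries ℕ ℂ) (μ : ℕ →₀ ℕ) :
    pdMulti n f μ = RR μ n * f (μ + n) := by
  unfold pdMulti RR
  rw [Finset.prod_congr rfl fun i _ => factratio_eq (μ i) (n i)]
  rfl

lemma coeff_op (m n μ : ℕ →₀ ℕ) (f : MvPowerSeries ℕ ℂ) :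
    MvPowerSeries.coeff (R := ℂ) μ (MvPowerSeries.monomial (R := ℂ) m 1 * pdMulti n f)
      = Efun (m, n) μ f := by
  rw [MvPowerSeries.coeff_monomial_mul, Efun]
  split
  · rw [one_mul]
    have : MvPowerSeries.coeff (R := ℂ) (μ - m) (pdMulti n f) = pdMulti n f (μ - m) := rfl
    rw [this, pdMulti_eq]
  · rfl

lemma applyOp_eq (a : Pair → ℂ) (f : MvPowerSeries ℕ ℂ) (μ : ℕ →₀ ℕ) :
    applyOp a f μ = ∑ᶠ p : Pair, a p * Efun p μ f := by
  unfold applyOp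
  exact finsum_congr fun p => by rw [coeff_op]

/-- The main finite region: all pairs relevant at top index `μ` for a triangular symbol. -/
noncomputable def P₁ (μ : ℕ →₀ ℕ) : Finset Pair :=
  Finset.Iic μ ×ˢ Finset.Iic (nu (normMinus μ))

lemma mem_P₁ {μ : ℕ →₀ ℕ} {p : Pair} (h1 : p.1 ≤ μ) (h2 : normPlus p.2 ≤ normMinus p.1) :
    p ∈ P₁ μ := by
  rw [P₁, Finset.mem_product, Finset.mem_Iic, Finset.mem_Iic]
  exact ⟨h1, le_nu (h2.trans (normMinus_mono h1))⟩

lemma applyOp_eq_sum {a : Pair → ℂ}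
    (ha : ∀ p, a p ≠ 0 → normPlus p.2 ≤ normMinus p.1)
    (f : MvPowerSeries ℕ ℂ) (μ : ℕ →₀ ℕ) :
    applyOp a f μ = ∑ p ∈ P₁ μ, a p * Efun p μ f := by
  rw [applyOp_eq]
  apply finsum_eq_sum_of_support_subset
  intro p hp
  simp only [Function.mem_support] at hp
  have ha' : a p ≠ 0 := fun h => hp (by simp [h])
  have hE : Efun p μ f ≠ 0 := fun h => hp (by simp [h])
  have h1 : p.1 ≤ μ := by
    by_contra h
    exact hE (by rw [Efun, if_neg h])
  exact mem_P₁ h1 (ha p ha')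


open Finset

lemma castDF (a b : ℕ) : ((Nat.descFactorial (a + b) b : ℕ) : ℂ)
    = (Nat.factorial (a + b) : ℂ) / (Nat.factorial a : ℂ) := by
  rw [eq_div_iff (by exact_mod_cast (Nat.factorial_pos a).ne')]
  have h := Nat.factorial_mul_descFactorial (Nat.le_add_left b a)
  simp only [Nat.add_sub_cancel] at h
  have h2 : (Nat.descFactorial (a+b) b) * a.factorial = (a+b).factorial := by
    rw [mul_comm]; exact h
  exact_mod_cast h2

lemma vand (N X M' : ℕ) :
    ∑ j ∈ Finset.Iic (min N M'), N.choose j * X.choose (M' - j) = (N + X).choose M' := by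
  rw [Nat.add_choose_eq, Finset.Nat.sum_antidiagonal_eq_sum_range_succ_mk]
  rw [show Finset.range (M'+1) = Finset.Iic M' by ext x; simp [Nat.lt_succ_iff]]
  apply Finset.sum_subset
  · intro j hj
    simp only [Finset.mem_Iic, le_min_iff] at *
    exact hj.2
  · intro j hj hj'
    simp only [Finset.mem_Iic, le_min_iff, not_and_or, not_le] at hj hj'
    have : N < j := by omega
    rw [Nat.choose_eq_zero_of_lt this, zero_mul]

lemma scalar (X N M' N' : ℕ) (h : M' ≤ X + N) :
    ((Nat.descFactorial (X + N) N : ℕ) : ℂ) *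
      ((Nat.descFactorial ((X + N - M') + N') N' : ℕ) : ℂ)
    = ∑ j ∈ Finset.Iic (min N M'),
        ((N.choose j * Nat.descFactorial M' j : ℕ) : ℂ) *
          (if M' - j ≤ X then
            ((Nat.descFactorial ((X - (M' - j)) + (N + N' - j)) (N + N' - j) : ℕ) : ℂ)
          else 0) := by
  have hfac : ∀ t : ℕ, ((Nat.factorial t : ℕ) : ℂ) ≠ 0 :=
    fun t => by exact_mod_cast (Nat.factorial_pos t).ne'
  have hterm : ∀ j ∈ Finset.Iic (min N M'),
      ((N.choose j * Nat.descFactorial M' j : ℕ) : ℂ) *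
          (if M' - j ≤ X then
            ((Nat.descFactorial ((X - (M' - j)) + (N + N' - j)) (N + N' - j) : ℕ) : ℂ)
          else 0)
      = ((N.choose j * X.choose (M' - j) : ℕ) : ℂ) *
          ((Nat.factorial M' : ℂ) * ((Nat.factorial ((X + N - M') + N') : ℂ) / (Nat.factorial X : ℂ))) := by
    intro j hj
    simp only [Finset.mem_Iic, le_min_iff] at hj
    obtain ⟨hjN, hjM⟩ := hj
    by_cases hg : M' - j ≤ X
    · rw [if_pos hg]
      have e1 : ((Nat.descFactorial M' j : ℕ) : ℂ)
          = (Nat.factorial M' : ℂ) / (Nat.factorial (M' - j) : ℂ) := by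
        have := castDF (M' - j) j
        rw [show (M' - j) + j = M' by omega] at this
        exact this
      have e2 : ((Nat.descFactorial ((X - (M' - j)) + (N + N' - j)) (N + N' - j) : ℕ) : ℂ)
          = (Nat.factorial ((X + N - M') + N') : ℂ) / (Nat.factorial (X - (M' - j)) : ℂ) := by
        have harg : (X - (M' - j)) + (N + N' - j) = (X + N - M') + N' := by omega
        rw [castDF, harg]
      have e3 : ((X.choose (M' - j) : ℕ) : ℂ) * (Nat.factorial (M' - j) : ℂ) * (Nat.factorial (X - (M' - j)) : ℂ) = (Nat.factorial X : ℂ) := by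
        exact_mod_cast Nat.choose_mul_factorial_mul_factorial hg
      push_cast
      rw [e1, e2]
      have hA := hfac (M' - j)
      have hB := hfac (X - (M' - j))
      have hX := hfac X
      field_simp
      linear_combination (-(N.choose j : ℂ)) * (Nat.factorial M' : ℂ) * (Nat.factorial ((X + N - M') + N') : ℂ) * e3
    · rw [if_neg hg]
      have : X.choose (M' - j) = 0 := Nat.choose_eq_zero_of_lt (by omega)
      rw [this]
      push_cast
      ring
  rw [Finset.sum_congr rfl hterm, ← Finset.sum_mul]
  have hsum : ∑ j ∈ Finset.Iic (min N M'), ((N.choose j * X.choose (M' - j) : ℕ) : ℂ)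
      = (((N + X).choose M' : ℕ) : ℂ) := by
    rw [← vand N X M']
    push_cast
    ring
  rw [hsum, castDF X N, castDF (X + N - M') N']
  have hch : (((N + X).choose M' : ℕ) : ℂ) * (Nat.factorial M' : ℂ) * (Nat.factorial (X + N - M') : ℂ) = (Nat.factorial (X + N) : ℂ) := by
    rw [show X + N - M' = N + X - M' by omega, show X + N = N + X by omega]
    exact_mod_cast Nat.choose_mul_factorial_mul_factorial (show M' ≤ N + X by omega)
  have hX := hfac X
  have hY := hfac (X + N - M')
  field_simp
  linear_combination (-(Nat.factorial ((X + N - M') + N') : ℂ)) * hch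

open Finset

lemma sum_Iic_prod (T : ℕ → ℕ → ℂ) (I : Finset ℕ) :
    ∀ c : ℕ →₀ ℕ, c.support ⊆ I →
      ∑ k ∈ Finset.Iic c, ∏ i ∈ I, T i (k i)
        = ∏ i ∈ I, ∑ j ∈ Finset.Iic (c i), T i j := by
  classical
  induction I using Finset.induction with
  | empty =>
    intro c hc
    have hc0 : c = 0 := by
      ext i
      by_contra h
      exact absurd (hc (Finsupp.mem_support_iff.mpr h)) (Finset.notMem_empty i)
    subst hc0
    have : Finset.Iic (0 : ℕ →₀ ℕ) = {0} := by
      ext k; simp [Finset.mem_Iic, le_zero_iff]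
    simp [this]
  | @insert a I' ha IH =>
    intro c hc
    have hsupp' : (c.erase a).support ⊆ I' := by
      intro i hi
      rw [Finsupp.support_erase, Finset.mem_erase] at hi
      rcases Finset.mem_insert.mp (hc hi.2) with h | h
      · exact absurd h hi.1
      · exact h
    have key : ∑ k ∈ Finset.Iic c, ∏ i ∈ insert a I', T i (k i)
        = ∑ x ∈ Finset.Iic (c a) ×ˢ Finset.Iic (c.erase a),
            T a x.1 * ∏ i ∈ I', T i (x.2 i) := by
      apply Finset.sum_nbij' (i := fun k => (k a, k.erase a))
        (j := fun x => Finsupp.single a x.1 + x.2)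
      · intro k hk
        rw [Finset.mem_Iic] at hk
        rw [Finset.mem_product, Finset.mem_Iic, Finset.mem_Iic]
        constructor
        · exact Finsupp.le_def.mp hk a
        · rw [Finsupp.le_def]
          intro i
          by_cases h : i = a
          · subst h; simp [Finsupp.erase_same]
          · rw [Finsupp.erase_ne h, Finsupp.erase_ne h]
            exact Finsupp.le_def.mp hk i
      · intro x hx
        rw [Finset.mem_product, Finset.mem_Iic, Finset.mem_Iic] at hx
        rw [Finset.mem_Iic, Finsupp.le_def]
        intro i
        rw [Finsupp.add_apply, Finsupp.single_apply]
        by_cases h : a = i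
        · subst h
          have : x.2 a ≤ (c.erase a) a := Finsupp.le_def.mp hx.2 a
          rw [Finsupp.erase_same] at this
          simpa [this, Nat.le_zero.mp this] using hx.1
        · have : x.2 i ≤ (c.erase a) i := Finsupp.le_def.mp hx.2 i
          rw [Finsupp.erase_ne (fun hh => h hh.symm)] at this
          simpa [h] using this
      · intro k hk
        exact Finsupp.single_add_erase a k
      · intro x hx
        rw [Finset.mem_product, Finset.mem_Iic, Finset.mem_Iic] at hx
        have hx2a : x.2 a = 0 := by
          have : x.2 a ≤ (c.erase a) a := Finsupp.le_def.mp hx.2 a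
          rw [Finsupp.erase_same] at this
          omega
        have h1 : (Finsupp.single a x.1 + x.2) a = x.1 := by
          rw [Finsupp.add_apply, Finsupp.single_apply, if_pos rfl, hx2a]
          omega
        have h2 : (Finsupp.single a x.1 + x.2).erase a = x.2 := by
          ext i
          by_cases h : i = a
          · subst h; rw [Finsupp.erase_same, hx2a]
          · rw [Finsupp.erase_ne h, Finsupp.add_apply, Finsupp.single_apply,
              if_neg (fun hh => h hh.symm), zero_add]
        rw [Prod.ext_iff]
        exact ⟨h1, h2⟩
      · intro k hk
        rw [Finset.prod_insert ha]
        congr 1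
        apply Finset.prod_congr rfl
        intro i hi
        rw [Finsupp.erase_ne (fun hh => ha (by rw [← hh]; exact hi))]
    have hprod : (∏ i ∈ I', ∑ j ∈ Finset.Iic (c i), T i j)
        = ∏ i ∈ I', ∑ j ∈ Finset.Iic ((c.erase a) i), T i j := by
      apply Finset.prod_congr rfl
      intro i hi
      rw [Finsupp.erase_ne (fun hh => ha (by rw [← hh]; exact hi))]
    rw [key, Finset.sum_product, Finset.prod_insert ha, hprod,
      ← IH (c.erase a) hsupp', Finset.sum_mul_sum]

noncomputable def KK (n m' k : ℕ →₀ ℕ) : ℂ :=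
  ∏ i ∈ k.support, ((Nat.choose (n i) (k i) * Nat.descFactorial (m' i) (k i) : ℕ) : ℂ)

noncomputable def comp1 (p q : Pair) (k : ℕ →₀ ℕ) : Pair := (p.1 + (q.1 - k), p.2 + q.2 - k)

lemma RR_superset {x n : ℕ →₀ ℕ} {I : Finset ℕ} (h : n.support ⊆ I) :
    RR x n = ∏ i ∈ I, ((Nat.descFactorial (x i + n i) (n i) : ℕ) : ℂ) := by
  apply Finset.prod_subset h
  intro i _ hi
  rw [Finsupp.notMem_support_iff.mp hi]
  simp

lemma KK_superset {n m' k : ℕ →₀ ℕ} {I : Finset ℕ} (h : k.support ⊆ I) :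
    KK n m' k = ∏ i ∈ I, ((Nat.choose (n i) (k i) * Nat.descFactorial (m' i) (k i) : ℕ) : ℂ) := by
  apply Finset.prod_subset h
  intro i _ hi
  rw [Finsupp.notMem_support_iff.mp hi]
  simp

lemma ite_prod_guard {x m' k : ℕ →₀ ℕ} {I : Finset ℕ} (h : m'.support ⊆ I) (F : ℕ → ℂ) :
    (if m' - k ≤ x then ∏ i ∈ I, F i else 0)
      = ∏ i ∈ I, (if m' i - k i ≤ x i then F i else 0) := by
  by_cases hg : m' - k ≤ x
  · rw [if_pos hg]
    apply Finset.prod_congr rfl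
    intro i _
    have := Finsupp.le_def.mp hg i
    rw [Finsupp.tsub_apply] at this
    rw [if_pos this]
  · rw [if_neg hg]
    rw [Finsupp.le_def] at hg
    push_neg at hg
    obtain ⟨i, hi⟩ := hg
    rw [Finsupp.tsub_apply] at hi
    have hiI : i ∈ I := by
      apply h
      rw [Finsupp.mem_support_iff]
      omega
    symm
    exact Finset.prod_eq_zero hiI (if_neg (by omega))

lemma support_inf_subset (n m' : ℕ →₀ ℕ) : (n ⊓ m').support ⊆ n.support := by
  intro i hi
  rw [Finsupp.mem_support_iff] at *
  rw [Finsupp.inf_apply] at hi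
  omega

lemma support_le {k c : ℕ →₀ ℕ} (h : k ≤ c) : k.support ⊆ c.support := by
  intro i hi
  rw [Finsupp.mem_support_iff] at *
  have := Finsupp.le_def.mp h i
  omega

/-- The core identity `(III)`. -/
lemma core_identity (x n m' n' : ℕ →₀ ℕ) (hq : m' ≤ x + n) :
    RR x n * RR (x + n - m') n'
      = ∑ k ∈ Finset.Iic (n ⊓ m'),
          KK n m' k * (if m' - k ≤ x then RR (x - (m' - k)) (n + n' - k) else 0) := by
  classical
  set I := (n.support ∪ m'.support) ∪ n'.support with hI
  have hnI : n.support ⊆ I := fun i hi => Finset.mem_union_left _ (Finset.mem_union_left _ hi)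
  have hmI : m'.support ⊆ I := fun i hi => Finset.mem_union_left _ (Finset.mem_union_right _ hi)
  have hnI' : n'.support ⊆ I := fun i hi => Finset.mem_union_right _ hi
  -- new variable names
  set T : ℕ → ℕ → ℂ := fun i j =>
    ((Nat.choose (n i) j * Nat.descFactorial (m' i) j : ℕ) : ℂ) *
      (if m' i - j ≤ x i then
        ((Nat.descFactorial ((x i - (m' i - j)) + (n i + n' i - j)) (n i + n' i - j) : ℕ) : ℂ)
      else 0) with hT
  have hrhs : ∀ k ∈ Finset.Iic (n ⊓ m'),
      KK n m' k * (if m' - k ≤ x then RR (x - (m' - k)) (n + n' - k) else 0)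
        = ∏ i ∈ I, T i (k i) := by
    intro k hk
    rw [Finset.mem_Iic] at hk
    have hkn : k ≤ n := hk.trans inf_le_left
    have hkI : k.support ⊆ I := fun i hi => hnI (support_le hkn hi)
    have hsI : (n + n' - k).support ⊆ I := by
      intro i hi
      rw [Finsupp.mem_support_iff, Finsupp.tsub_apply, Finsupp.add_apply] at hi
      by_cases h1 : n i = 0
      · exact hnI' (Finsupp.mem_support_iff.mpr (by omega))
      · exact hnI (Finsupp.mem_support_iff.mpr h1)
    rw [KK_superset hkI, RR_superset hsI, ite_prod_guard hmI, ← Finset.prod_mul_distrib]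
    apply Finset.prod_congr rfl
    intro i _
    simp only [hT, Finsupp.tsub_apply, Finsupp.add_apply]
  rw [Finset.sum_congr rfl hrhs]
  rw [sum_Iic_prod T I (n ⊓ m') (fun i hi => hnI (support_inf_subset n m' hi))]
  rw [RR_superset hnI, RR_superset (x := x + n - m') hnI', ← Finset.prod_mul_distrib]
  apply Finset.prod_congr rfl
  intro i _
  have hxn : (x + n - m') i = x i + n i - m' i := by
    rw [Finsupp.tsub_apply, Finsupp.add_apply]
  rw [hxn, Finsupp.inf_apply]
  have hqi : m' i ≤ x i + n i := by
    have := Finsupp.le_def.mp hq i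
    rw [Finsupp.add_apply] at this
    exact this
  exact scalar (x i) (n i) (m' i) (n' i) hqi

/-- The key per-pair composition identity `(II')`. -/
lemma key (p q : Pair) (μ : ℕ →₀ ℕ) (f : MvPowerSeries ℕ ℂ) (hm : p.1 ≤ μ) :
    RR (μ - p.1) p.2 * Efun q (μ - p.1 + p.2) f
      = ∑ k ∈ Finset.Iic (p.2 ⊓ q.1), KK p.2 q.1 k * Efun (comp1 p q k) μ f := by
  classical
  obtain ⟨m, n⟩ := p
  obtain ⟨m', n'⟩ := q
  simp only at *
  set x := μ - m with hx
  have hmi : ∀ i, m i ≤ μ i := Finsupp.le_def.mp hm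
  have hxi : ∀ i, x i = μ i - m i := fun i => Finsupp.tsub_apply μ m i
  by_cases hq : m' ≤ x + n
  · -- main case
    have hqi : ∀ i, m' i ≤ x i + n i := by
      intro i
      have := Finsupp.le_def.mp hq i
      rw [Finsupp.add_apply] at this
      exact this
    rw [show Efun (m', n') (x + n) f = RR (x + n - m') n' * f (x + n - m' + n') from
      by rw [Efun, if_pos hq]]
    have hterm : ∀ k ∈ Finset.Iic (n ⊓ m'),
        KK n m' k * Efun (comp1 (m, n) (m', n') k) μ f
          = (KK n m' k * (if m' - k ≤ x then RR (x - (m' - k)) (n + n' - k) else 0))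
              * f (x + n - m' + n') := by
      intro k hk
      rw [Finset.mem_Iic] at hk
      have hki : ∀ i, k i ≤ min (n i) (m' i) := by
        intro i
        have := Finsupp.le_def.mp hk i
        rw [Finsupp.inf_apply] at this
        exact this
      rw [comp1, Efun]
      simp only
      by_cases hg : m + (m' - k) ≤ μ
      · have hg' : m' - k ≤ x := by
          rw [Finsupp.le_def]
          intro i
          have := Finsupp.le_def.mp hg i
          rw [Finsupp.add_apply, Finsupp.tsub_apply] at this
          rw [Finsupp.tsub_apply, hxi]
          have := hmi i
          omega
        rw [if_pos hg, if_pos hg']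
        have e1 : μ - (m + (m' - k)) = x - (m' - k) := by
          ext i
          simp only [Finsupp.tsub_apply, Finsupp.add_apply]
          have := hmi i
          have := hki i
          have := hxi i
          omega
        have e2 : x - (m' - k) + (n + n' - k) = x + n - m' + n' := by
          ext i
          simp only [Finsupp.tsub_apply, Finsupp.add_apply]
          have := hmi i
          have := hki i
          have := hxi i
          have := hqi i
          have h3 := Finsupp.le_def.mp hg i
          rw [Finsupp.add_apply, Finsupp.tsub_apply] at h3
          omega
        rw [e1, e2]
        ring
      · have hg' : ¬ (m' - k ≤ x) := by
          intro hcon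
          apply hg
          rw [Finsupp.le_def]
          intro i
          have := Finsupp.le_def.mp hcon i
          rw [Finsupp.tsub_apply] at this
          rw [Finsupp.add_apply, Finsupp.tsub_apply]
          have := hmi i
          have := hxi i
          omega
        rw [if_neg hg, if_neg hg']
        ring
    rw [Finset.sum_congr rfl hterm, ← Finset.sum_mul, ← core_identity x n m' n' hq]
    ring
  · -- degenerate case: everything vanishes
    rw [show Efun (m', n') (x + n) f = 0 from by rw [Efun, if_neg hq]]
    rw [mul_zero]
    symm
    apply Finset.sum_eq_zero
    intro k hk
    rw [Finset.mem_Iic] at hk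
    have hki : ∀ i, k i ≤ min (n i) (m' i) := by
      intro i
      have := Finsupp.le_def.mp hk i
      rw [Finsupp.inf_apply] at this
      exact this
    have hg : ¬ (m + (m' - k) ≤ μ) := by
      intro hcon
      apply hq
      rw [Finsupp.le_def]
      intro i
      have h1 := Finsupp.le_def.mp hcon i
      rw [Finsupp.add_apply, Finsupp.tsub_apply] at h1
      rw [Finsupp.add_apply, hxi]
      have := hmi i
      have := hki i
      omega
    rw [comp1, Efun]
    simp only
    rw [if_neg hg, mul_zero]

lemma tri_comp {p q : Pair} {k : ℕ →₀ ℕ} (hk : k ≤ p.2 ⊓ q.1)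
    (hp : normPlus p.2 ≤ normMinus p.1) (hq : normPlus q.2 ≤ normMinus q.1) :
    normPlus (comp1 p q k).2 ≤ normMinus (comp1 p q k).1 := by
  have hk2 : k ≤ p.2 := hk.trans inf_le_left
  have hk1 : k ≤ q.1 := hk.trans inf_le_right
  have e1 : normPlus (p.2 + q.2 - k) + normPlus k = normPlus p.2 + normPlus q.2 := by
    rw [normPlus_sub_add (hk2.trans le_self_add), normPlus_add]
  have e2 : normMinus (p.1 + (q.1 - k)) = normMinus p.1 + normMinus (q.1 - k) :=
    normMinus_add _ _
  have e3 : normMinus (q.1 - k) + normMinus k = normMinus q.1 := normMinus_sub_add hk1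
  have e4 := normMinus_le_normPlus k
  simp only [comp1]
  omega

lemma degS_comp {p q : Pair} {k : ℕ →₀ ℕ} :
    degS (comp1 p q k).1 ≤ degS p.1 + degS q.1 := by
  simp only [comp1, degS_add]
  have := degS_mono (tsub_le_self : q.1 - k ≤ q.1)
  omega

lemma fst_le_comp1 {p q : Pair} {k : ℕ →₀ ℕ} : p.1 ≤ (comp1 p q k).1 := le_self_add

lemma P₁_mono {u v : ℕ →₀ ℕ} (h : u ≤ v) : P₁ u ⊆ P₁ v := by
  intro p hp
  rw [P₁, Finset.mem_product, Finset.mem_Iic, Finset.mem_Iic] at hp ⊢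
  exact ⟨hp.1.trans h, hp.2.trans (nu_mono (normMinus_mono h))⟩

lemma mem_P₁_iff {μ : ℕ →₀ ℕ} {p : Pair} :
    p ∈ P₁ μ ↔ p.1 ≤ μ ∧ p.2 ≤ nu (normMinus μ) := by
  rw [P₁, Finset.mem_product, Finset.mem_Iic, Finset.mem_Iic]

/-- The inner summand for the composition symbol. -/
noncomputable def itef (a b : Pair → ℂ) (r : Pair) (p q : Pair) : ℂ :=
  ∑ k ∈ Finset.Iic (p.2 ⊓ q.1), if comp1 p q k = r then a p * b q * KK p.2 q.1 k else 0

/-- The composition symbol. -/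
noncomputable def cSym (a b : Pair → ℂ) (r : Pair) : ℂ :=
  ∑ p ∈ P₁ r.1, ∑ q ∈ P₁ (r.1 + nu (normMinus r.1)), itef a b r p q

lemma itef_ne_zero {a b : Pair → ℂ} {r p q : Pair} (h : itef a b r p q ≠ 0) :
    a p ≠ 0 ∧ b q ≠ 0 ∧ ∃ k, k ≤ p.2 ⊓ q.1 ∧ comp1 p q k = r := by
  obtain ⟨k, hk, hne⟩ := Finset.exists_ne_zero_of_sum_ne_zero h
  rw [Finset.mem_Iic] at hk
  by_cases hc : comp1 p q k = r
  · rw [if_pos hc] at hne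
    exact ⟨fun h0 => hne (by rw [h0]; ring), fun h0 => hne (by rw [h0]; ring), k, hk, hc⟩
  · rw [if_neg hc] at hne
    exact absurd rfl hne

lemma mem_of_term {a b : Pair → ℂ} {r p q : Pair} {k : ℕ →₀ ℕ}
    (ha : ∀ p, a p ≠ 0 → normPlus p.2 ≤ normMinus p.1)
    (hb : ∀ p, b p ≠ 0 → normPlus p.2 ≤ normMinus p.1)
    (hap : a p ≠ 0) (hbq : b q ≠ 0) (hk : k ≤ p.2 ⊓ q.1) (hc : comp1 p q k = r) :
    p ∈ P₁ r.1 ∧ q ∈ P₁ (r.1 + nu (normMinus r.1)) := by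
  have hpr : p.1 ≤ r.1 := by rw [← hc]; exact fst_le_comp1
  have hpP : p ∈ P₁ r.1 := mem_P₁ hpr (ha p hap)
  have hp2 : p.2 ≤ nu (normMinus r.1) := (mem_P₁_iff.mp hpP).2
  have hq1 : q.1 ≤ r.1 + nu (normMinus r.1) := by
    have h1 : q.1 - k ≤ r.1 := by
      rw [← hc]; exact le_add_self
    have h2 : k ≤ nu (normMinus r.1) := (hk.trans inf_le_left).trans hp2
    calc q.1 = q.1 - k + k := (tsub_add_cancel_of_le (hk.trans inf_le_right)).symm
    _ ≤ r.1 + nu (normMinus r.1) := add_le_add h1 h2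
  exact ⟨hpP, mem_P₁ hq1 (hb q hbq)⟩

lemma cSym_ne_zero {a b : Pair → ℂ} {r : Pair} (h : cSym a b r ≠ 0) :
    ∃ p q k, a p ≠ 0 ∧ b q ≠ 0 ∧ k ≤ p.2 ⊓ q.1 ∧ comp1 p q k = r := by
  obtain ⟨p, _, hp⟩ := Finset.exists_ne_zero_of_sum_ne_zero h
  obtain ⟨q, _, hq⟩ := Finset.exists_ne_zero_of_sum_ne_zero hp
  obtain ⟨h1, h2, k, h3, h4⟩ := itef_ne_zero hq
  exact ⟨p, q, k, h1, h2, h3, h4⟩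

lemma cSym_tri {a b : Pair → ℂ}
    (ha : ∀ p, a p ≠ 0 → normPlus p.2 ≤ normMinus p.1)
    (hb : ∀ p, b p ≠ 0 → normPlus p.2 ≤ normMinus p.1) :
    ∀ r, cSym a b r ≠ 0 → normPlus r.2 ≤ normMinus r.1 := by
  intro r h
  obtain ⟨p, q, k, h1, h2, h3, h4⟩ := cSym_ne_zero h
  rw [← h4]
  exact tri_comp h3 (ha p h1) (hb q h2)

lemma cSym_degS {a b : Pair → ℂ} {B₁ B₂ : ℕ}
    (hB₁ : ∀ p, a p ≠ 0 → degS p.1 ≤ B₁) (hB₂ : ∀ p, b p ≠ 0 → degS p.1 ≤ B₂) :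
    ∀ r, cSym a b r ≠ 0 → degS r.1 ≤ B₁ + B₂ := by
  intro r h
  obtain ⟨p, q, k, h1, h2, h3, h4⟩ := cSym_ne_zero h
  rw [← h4]
  exact degS_comp.trans (add_le_add (hB₁ p h1) (hB₂ q h2))

/-- `cSym` may be computed over any larger pair of regions. -/
lemma cSym_eq_sum {a b : Pair → ℂ}
    (ha : ∀ p, a p ≠ 0 → normPlus p.2 ≤ normMinus p.1)
    (hb : ∀ p, b p ≠ 0 → normPlus p.2 ≤ normMinus p.1)
    (r : Pair) {U V : Finset Pair} (hU : P₁ r.1 ⊆ U)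
    (hV : P₁ (r.1 + nu (normMinus r.1)) ⊆ V) :
    cSym a b r = ∑ p ∈ U, ∑ q ∈ V, itef a b r p q := by
  rw [cSym]
  have step1 : ∀ p : Pair, ∑ q ∈ P₁ (r.1 + nu (normMinus r.1)), itef a b r p q
      = ∑ q ∈ V, itef a b r p q := by
    intro p
    apply Finset.sum_subset hV
    intro q _ hq
    by_contra hne
    obtain ⟨h1, h2, k, h3, h4⟩ := itef_ne_zero hne
    exact hq (mem_of_term ha hb h1 h2 h3 h4).2
  rw [Finset.sum_congr rfl fun p _ => step1 p]
  apply Finset.sum_subset hU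
  intro p _ hp
  apply Finset.sum_eq_zero
  intro q _
  by_contra hne
  obtain ⟨h1, h2, k, h3, h4⟩ := itef_ne_zero hne
  exact hp (mem_of_term ha hb h1 h2 h3 h4).1

lemma applyOp_eq_sum' {a : Pair → ℂ}
    (ha : ∀ p, a p ≠ 0 → normPlus p.2 ≤ normMinus p.1)
    (f : MvPowerSeries ℕ ℂ) (ρ : ℕ →₀ ℕ) {S : Finset Pair} (hS : P₁ ρ ⊆ S) :
    applyOp a f ρ = ∑ p ∈ S, a p * Efun p ρ f := by
  rw [applyOp_eq_sum ha f ρ]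
  apply Finset.sum_subset hS
  intro p _ hp
  by_contra hne
  have hap : a p ≠ 0 := fun h => hne (by rw [h]; ring)
  have hE : Efun p ρ f ≠ 0 := fun h => hne (by rw [h]; ring)
  have h1 : p.1 ≤ ρ := by
    by_contra hcon
    exact hE (by rw [Efun, if_neg hcon])
  exact hp (mem_P₁ h1 (ha p hap))

lemma comp_eq {a b : Pair → ℂ}
    (ha : ∀ p, a p ≠ 0 → normPlus p.2 ≤ normMinus p.1)
    (hb : ∀ p, b p ≠ 0 → normPlus p.2 ≤ normMinus p.1)
    (f : MvPowerSeries ℕ ℂ) (μ : ℕ →₀ ℕ) :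
    applyOp (cSym a b) f μ = applyOp a (applyOp b f) μ := by
  classical
  set μ' := μ + nu (normMinus μ) with hμ'
  rw [applyOp_eq_sum (cSym_tri ha hb) f μ]
  have lhs1 : ∀ r ∈ P₁ μ, cSym a b r * Efun r μ f
      = ∑ p ∈ P₁ μ, ∑ q ∈ P₁ μ', (itef a b r p q) * Efun r μ f := by
    intro r hr
    have hr1 : r.1 ≤ μ := (mem_P₁_iff.mp hr).1
    rw [cSym_eq_sum ha hb r (P₁_mono hr1)
      (P₁_mono (add_le_add hr1 (nu_mono (normMinus_mono hr1))))]
    rw [Finset.sum_mul]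
    exact Finset.sum_congr rfl fun p _ => by rw [Finset.sum_mul]
  rw [Finset.sum_congr rfl lhs1, Finset.sum_comm]
  have lhs2 : ∀ p : Pair, ∑ r ∈ P₁ μ, ∑ q ∈ P₁ μ', itef a b r p q * Efun r μ f
      = ∑ q ∈ P₁ μ', ∑ k ∈ Finset.Iic (p.2 ⊓ q.1),
          (a p * b q * KK p.2 q.1 k) * Efun (comp1 p q k) μ f := by
    intro p
    rw [Finset.sum_comm]
    apply Finset.sum_congr rfl
    intro q _
    have hstep : ∀ r ∈ P₁ μ, itef a b r p q * Efun r μ f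
        = ∑ k ∈ Finset.Iic (p.2 ⊓ q.1),
            (if comp1 p q k = r then a p * b q * KK p.2 q.1 k else 0) * Efun r μ f := by
      intro r _
      rw [itef, Finset.sum_mul]
    rw [Finset.sum_congr rfl hstep, Finset.sum_comm]
    apply Finset.sum_congr rfl
    intro k hk
    rw [Finset.mem_Iic] at hk
    have hcollapse : ∀ r ∈ P₁ μ,
        (if comp1 p q k = r then a p * b q * KK p.2 q.1 k else 0) * Efun r μ f
        = if r = comp1 p q k then (a p * b q * KK p.2 q.1 k) * Efun r μ f else 0 := by
      intro r _
      by_cases h : comp1 p q k = r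
      · rw [if_pos h, if_pos h.symm]
      · rw [if_neg h, if_neg (fun hh => h hh.symm), zero_mul]
    rw [Finset.sum_congr rfl hcollapse, Finset.sum_ite_eq' (P₁ μ) (comp1 p q k)]
    by_cases hmem : comp1 p q k ∈ P₁ μ
    · rw [if_pos hmem]
    · rw [if_neg hmem]
      by_contra hne
      have hne' : (a p * b q * KK p.2 q.1 k) * Efun (comp1 p q k) μ f ≠ 0 :=
        fun h => hne h.symm
      have hap : a p ≠ 0 := fun h => hne' (by rw [h]; ring)
      have hbq : b q ≠ 0 := fun h => hne' (by rw [h]; ring)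
      have hE : Efun (comp1 p q k) μ f ≠ 0 := fun h => hne' (by rw [h]; ring)
      have h1 : (comp1 p q k).1 ≤ μ := by
        by_contra hcon
        exact hE (by rw [Efun, if_neg hcon])
      exact hmem (mem_P₁ h1 (tri_comp hk (ha p hap) (hb q hbq)))
  rw [Finset.sum_congr rfl fun p _ => lhs2 p]
  rw [applyOp_eq_sum ha (applyOp b f) μ]
  apply Finset.sum_congr rfl
  intro p hp
  symm
  by_cases hple : p.1 ≤ μ
  · have hp2 : p.2 ≤ nu (normMinus μ) := (mem_P₁_iff.mp hp).2
    have hsub : P₁ (μ - p.1 + p.2) ⊆ P₁ μ' := by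
      apply P₁_mono
      calc μ - p.1 + p.2 ≤ μ + p.2 := add_le_add tsub_le_self le_rfl
      _ ≤ μ' := add_le_add le_rfl hp2
    rw [show Efun p μ (applyOp b f)
        = RR (μ - p.1) p.2 * applyOp b f (μ - p.1 + p.2) from by rw [Efun, if_pos hple]]
    rw [applyOp_eq_sum' hb f (μ - p.1 + p.2) hsub]
    rw [Finset.mul_sum, Finset.mul_sum]
    apply Finset.sum_congr rfl
    intro q _
    calc a p * (RR (μ - p.1) p.2 * (b q * Efun q (μ - p.1 + p.2) f))
        = (a p * b q) * (RR (μ - p.1) p.2 * Efun q (μ - p.1 + p.2) f) := by ring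
      _ = (a p * b q) * ∑ k ∈ Finset.Iic (p.2 ⊓ q.1),
            KK p.2 q.1 k * Efun (comp1 p q k) μ f := by rw [key p q μ f hple]
      _ = ∑ k ∈ Finset.Iic (p.2 ⊓ q.1),
            (a p * b q * KK p.2 q.1 k) * Efun (comp1 p q k) μ f := by
          rw [Finset.mul_sum]
          exact Finset.sum_congr rfl fun k _ => by ring
  · rw [show Efun p μ (applyOp b f) = 0 from by rw [Efun, if_neg hple], mul_zero]
    symm
    apply Finset.sum_eq_zero

    intro q _
    apply Finset.sum_eq_zero
    intro k _
    have hz : Efun (comp1 p q k) μ f = 0 := by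
      rw [Efun, if_neg]
      intro hcon
      exact hple (le_trans fst_le_comp1 hcon)
    rw [hz, mul_zero]

end Tri

/-- Formal triangular differential operators are closed under addition, scalar
multiplication and composition, i.e. they form a (non-commutative) subalgebra of the
formal differential operators on `ℂ[[s_*]]`. -/
theorem stmt17 (D₁ D₂ : MvPowerSeries ℕ ℂ → MvPowerSeries ℕ ℂ) (c : ℂ)
    (h₁ : IsTriangular D₁) (h₂ : IsTriangular D₂) :
    IsTriangular (fun f => D₁ f + D₂ f)
    ∧ IsTriangular (fun f => c • D₁ f)
    ∧ IsTriangular (D₁ ∘ D₂) := by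
  obtain ⟨a, ha, ⟨B₁, hB₁⟩, hDa⟩ := h₁
  obtain ⟨b, hb, ⟨B₂, hB₂⟩, hDb⟩ := h₂
  have hab : ∀ p : Tri.Pair, a p + b p ≠ 0 → normPlus p.2 ≤ normMinus p.1 := by
    intro p hp
    by_cases h1 : a p = 0
    · exact hb p (fun h2 => hp (by rw [h1, h2, add_zero]))
    · exact ha p h1
  have hca : ∀ p : Tri.Pair, c * a p ≠ 0 → normPlus p.2 ≤ normMinus p.1 := by
    intro p hp
    exact ha p (fun h1 => hp (by rw [h1, mul_zero]))
  refine ⟨⟨fun p => a p + b p, hab, ⟨max B₁ B₂, ?_⟩, ?_⟩,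
    ⟨fun p => c * a p, hca, ⟨B₁, ?_⟩, ?_⟩,
    ⟨Tri.cSym a b, Tri.cSym_tri ha hb, ⟨B₁ + B₂, Tri.cSym_degS hB₁ hB₂⟩, ?_⟩⟩
  · intro p hp
    by_cases h1 : a p = 0
    · exact le_max_of_le_right (hB₂ p (fun h2 => hp (by simp [h1, h2])))
    · exact le_max_of_le_left (hB₁ p h1)
  · intro f
    funext μ
    show (D₁ f + D₂ f) μ = applyOp (fun p => a p + b p) f μ
    have h1 : (D₁ f + D₂ f) μ = D₁ f μ + D₂ f μ := rfl
    rw [h1, hDa, hDb, Tri.applyOp_eq_sum ha f μ, Tri.applyOp_eq_sum hb f μ,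
      Tri.applyOp_eq_sum hab f μ, ← Finset.sum_add_distrib]
    exact Finset.sum_congr rfl fun p _ => by ring
  · intro p hp
    exact hB₁ p (fun h1 => hp (by simp [h1]))
  · intro f
    funext μ
    show (c • D₁ f) μ = applyOp (fun p => c * a p) f μ
    have h1 : (c • D₁ f) μ = c * D₁ f μ := rfl
    rw [h1, hDa, Tri.applyOp_eq_sum ha f μ, Tri.applyOp_eq_sum hca f μ, Finset.mul_sum]
    exact Finset.sum_congr rfl fun p _ => by ring
  · intro f
    funext μ
    show (D₁ (D₂ f)) μ = applyOp (Tri.cSym a b) f μ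
    rw [hDa, hDb]
    exact (Tri.comp_eq ha hb f μ).symm
end
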